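/- Let u ≥ 0 solve Δu = f χ_{{u>0}} near 0 ∈ ∂{u > 0} with f ≥ λ > 0 bounded near the free boundary. Then quadratic nondegeneracy holds: sup_{B_r(0)} u ≥ (λ/(2d)) r² for all sufficiently small r > 0. -/

import Mathlib

open MeasureTheory Metric Set

/-- Laplacian as the sum of second partial derivatives. -/
noncomputable def lap {d : ℕ} (u : EuclideanSpace ℝ (Fin d) → ℝ)
    (x : EuclideanSpace ℝ (Fin d)) : ℝ :=
  ∑ i, fderiv ℝ (fun y => fderiv ℝ u y (EuclideanSpace.single i 1)) x
    (EuclideanSpace.single i 1)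

lemma engine_right (h : ℝ → ℝ) (σ : ℝ) (hσ : 0 < σ)
    (hmax : ∀ t ∈ Set.Icc (0:ℝ) σ, h t ≤ h 0)
    (hcont : ContinuousAt h 0)
    (hderiv : ∀ t ∈ Set.Ioc (0:ℝ) σ, ∃ c, 0 < c ∧ HasDerivAt h c t) : False := by
  have hcont' : ContinuousOn h (Set.Icc 0 σ) := by
    intro t ht
    rcases eq_or_lt_of_le ht.1 with h0 | h0
    · exact (h0 ▸ hcont).continuousWithinAt
    · exact ((hderiv t ⟨h0, ht.2⟩).choose_spec.2.differentiableAt.continuousAt).continuousWithinAt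
  have hmono : StrictMonoOn h (Set.Icc 0 σ) := by
    apply strictMonoOn_of_deriv_pos (convex_Icc 0 σ) hcont'
    intro t ht
    rw [interior_Icc] at ht
    obtain ⟨c, hc, hd⟩ := hderiv t ⟨ht.1, ht.2.le⟩
    rw [hd.deriv]; exact hc
  have := hmono (Set.left_mem_Icc.2 hσ.le) (Set.right_mem_Icc.2 hσ.le) hσ
  exact absurd (hmax σ (Set.right_mem_Icc.2 hσ.le)) (not_le.2 this)

lemma engine_left (h : ℝ → ℝ) (σ : ℝ) (hσ : 0 < σ)
    (hmax : ∀ t ∈ Set.Icc (-σ) (0:ℝ), h t ≤ h 0)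
    (hcont : ContinuousAt h 0)
    (hderiv : ∀ t ∈ Set.Ico (-σ) (0:ℝ), ∃ c, c < 0 ∧ HasDerivAt h c t) : False := by
  apply engine_right (fun t => h (-t)) σ hσ
  · intro t ht
    simpa using hmax (-t) ⟨by simpa using ht.2, by simpa using ht.1⟩
  · have : ContinuousAt h (-(0:ℝ)) := by simpa using hcont
    exact this.comp (continuous_neg.continuousAt)
  · intro t ht
    obtain ⟨c, hc, hd⟩ := hderiv (-t) ⟨by simpa using ht.2, by simpa using ht.1⟩
    refine ⟨-c, by linarith, ?_⟩
    have := hd.comp t (hasDerivAt_neg t)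
    simpa [mul_comm, Function.comp_def] using this

lemma key {d : ℕ} (u : EuclideanSpace ℝ (Fin d) → ℝ) (a : ℝ) (ha : 0 ≤ a)
    (x₀ xs : EuclideanSpace ℝ (Fin d))
    (hucont : ContinuousAt u xs)
    (hmax : IsLocalMax (fun x => u x - a * ‖x - x₀‖ ^ 2) xs) :
    lap u xs ≤ 2 * a * d := by
  by_contra hlt
  push_neg at hlt
  have hsum : ∑ _i : Fin d, (2*a) <
      ∑ i : Fin d, fderiv ℝ (fun y => fderiv ℝ u y (EuclideanSpace.single i 1)) xs
        (EuclideanSpace.single i 1) := by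
    have : ∑ _i : Fin d, (2*a) = 2*a*d := by
      simp [Finset.sum_const, Finset.card_univ, nsmul_eq_mul]; ring
    rw [this]; exact hlt
  obtain ⟨i, -, hi⟩ := Finset.exists_lt_of_sum_lt hsum
  set e : EuclideanSpace ℝ (Fin d) := EuclideanSpace.single i 1 with he
  have hene : ‖e‖ = 1 := by simp [he, EuclideanSpace.norm_single]
  set g : EuclideanSpace ℝ (Fin d) → ℝ := fun y => fderiv ℝ u y e with hg
  set c : ℝ := fderiv ℝ g xs e with hcdef
  have hc2a : 2*a < c := hi
  have hcpos : 0 < c := lt_of_le_of_lt (by positivity) hc2a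
  have hgdiff : DifferentiableAt ℝ g xs := by
    by_contra hnd
    rw [hcdef, fderiv_zero_of_not_differentiableAt hnd] at hcpos
    simp at hcpos
  set L : ℝ → EuclideanSpace ℝ (Fin d) := fun t => xs + t • e with hLdef
  have hL0 : L 0 = xs := by simp [hLdef]
  have hLd : ∀ t, HasDerivAt L e t := by
    intro t
    have h1 : HasDerivAt (fun s : ℝ => s • e) ((1:ℝ) • e) t :=
      (hasDerivAt_id t).smul_const e
    simpa [hLdef] using h1.const_add xs
  have hLcont : Continuous L := by
    fun_prop
  set v : EuclideanSpace ℝ (Fin d) := xs - x₀ with hv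
  set b : ℝ := 2 * a * (inner ℝ v e : ℝ) with hb
  -- quadratic expansion
  have hQ : ∀ s : ℝ, a * ‖L s - x₀‖ ^ 2 = a * ‖v‖^2 + b * s + a * s^2 := by
    intro s
    have h1 : L s - x₀ = v + s • e := by
      simp [hLdef, hv]; abel
    rw [h1, norm_add_sq_real, real_inner_smul_right, norm_smul, hene, mul_one, Real.norm_eq_abs, sq_abs, hb]
    ring
  set φ : ℝ → ℝ := fun t => g (L t) with hφdef
  have hφd : HasDerivAt φ c 0 := by
    have h0 : HasFDerivAt g (fderiv ℝ g xs) (L 0) := by rw [hL0]; exact hgdiff.hasFDerivAt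
    exact h0.comp_hasDerivAt 0 (hLd 0)
  -- h and its properties
  set h : ℝ → ℝ := fun t => u (L t) - a * ‖L t - x₀‖ ^ 2 with hhdef
  have hhmax : IsLocalMax h 0 := by
    have hm : IsLocalMax (fun x => u x - a * ‖x - x₀‖ ^ 2) (L 0) := by rw [hL0]; exact hmax
    exact hm.comp_continuous (hLcont.continuousAt (x := (0:ℝ)))
  have hhcont : ContinuousAt h 0 := by
    have h1 : ContinuousAt (fun t => u (L t)) 0 :=
      (show ContinuousAt u (L 0) by rw [hL0]; exact hucont).comp (hLcont.continuousAt)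
    have h2 : ContinuousAt (fun t => a * ‖L t - x₀‖ ^ 2) 0 := by fun_prop
    exact h1.sub h2
  -- derivative of h where u is differentiable
  have hQd : ∀ t : ℝ, HasDerivAt (fun s => a * ‖L s - x₀‖ ^ 2) (b + 2*a*t) t := by
    intro t
    have heq : (fun s => a * ‖L s - x₀‖ ^ 2) = fun s => a * ‖v‖^2 + b * s + a * s^2 :=
      funext hQ
    rw [heq]
    have h1 : HasDerivAt (fun s : ℝ => a * ‖v‖^2 + b * s) b t := by
      simpa using (hasDerivAt_id t).const_mul b |>.const_add (a * ‖v‖^2)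
    have h2 : HasDerivAt (fun s : ℝ => a * s^2) (a * (2*t)) t := by
      simpa using (hasDerivAt_pow 2 t).const_mul a
    have := h1.add h2
    rw [show b + 2*a*t = b + a*(2*t) by ring]
    exact this
  have hhd : ∀ t : ℝ, DifferentiableAt ℝ u (L t) →
      HasDerivAt h (φ t - (b + 2*a*t)) t := by
    intro t hdiff
    have h1 : HasDerivAt (fun s => u (L s)) (φ t) t :=
      HasFDerivAt.comp_hasDerivAt t hdiff.hasFDerivAt (hLd t)
    exact h1.sub (hQd t)
  -- junk case: if u not differentiable at L t then φ t = 0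
  have hjunk : ∀ t : ℝ, ¬ DifferentiableAt ℝ u (L t) → φ t = 0 := by
    intro t hnd
    simp [hφdef, hg, fderiv_zero_of_not_differentiableAt hnd]
  -- φ 0 is 0 or b
  have hφ0 : φ 0 = 0 ∨ φ 0 = b := by
    by_cases hdiff : DifferentiableAt ℝ u xs
    · right
      have h1 : HasDerivAt h (φ 0 - (b + 2*a*0)) 0 := hhd 0 (by rw [hL0]; exact hdiff)
      have h2 := hhmax.deriv_eq_zero
      rw [h1.deriv] at h2
      linarith
    · left; exact hjunk 0 (by rw [hL0]; exact hdiff)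
  set β : ℝ := φ 0 with hβ
  set ε' : ℝ := (c - 2*a)/2 with hε'
  have hε'pos : 0 < ε' := by rw [hε']; linarith
  have hcε : 0 < c - ε' := by rw [hε']; linarith
  -- slope control
  have hev : ∀ᶠ t in nhdsWithin 0 {(0:ℝ)}ᶜ, |slope φ 0 t - c| < ε' := by
    have h1 := hasDerivAt_iff_tendsto_slope.1 hφd
    have h2 := Metric.tendsto_nhds.1 h1 ε' hε'pos
    simpa [Real.dist_eq] using h2
  rw [eventually_nhdsWithin_iff, Metric.eventually_nhds_iff] at hev
  obtain ⟨δ₁, hδ₁pos, hδ₁⟩ := hev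
  have hest : ∀ t : ℝ, t ≠ 0 → |t| < δ₁ → |φ t - β - c * t| ≤ ε' * |t| := by
    intro t ht htl
    have h2 := hδ₁ (y := t) (by simpa [Real.dist_eq] using htl) (by simpa using ht)
    have hs : slope φ 0 t = (φ t - β) / t := by
      rw [slope_def_field]; rw [sub_zero, hβ]
    rw [hs] at h2
    have h3 : φ t - β - c * t = ((φ t - β)/t - c) * t := by field_simp
    rw [h3, abs_mul]
    exact mul_le_mul_of_nonneg_right h2.le (abs_nonneg t)
  -- local max radius
  obtain ⟨δ₂, hδ₂pos, hδ₂⟩ := Metric.eventually_nhds_iff.1 hhmax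
  set σ : ℝ := min δ₁ δ₂ / 2 with hσdef
  have hσpos : 0 < σ := by rw [hσdef]; positivity
  have hσδ₁ : σ < δ₁ := by
    have h := min_le_left δ₁ δ₂; rw [hσdef]; linarith
  have hσδ₂ : σ < δ₂ := by
    have h := min_le_right δ₁ δ₂; rw [hσdef]; linarith
  have hcases : (0 ≤ β ∧ b ≤ β) ∨ (β ≤ 0 ∧ β ≤ b) := by
    rcases hφ0 with hh | hh <;> rcases le_total b 0 with hb' | hb'
    · left; constructor <;> linarith
    · right; constructor <;> linarith
    · right; constructor <;> linarith
    · left; constructor <;> linarith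
  have h5 : c = 2*a + ε' + ε' := by rw [hε']; ring
  rcases hcases with ⟨hβ0, hbβ⟩ | ⟨hβ0, hbβ⟩
  · -- right engine
    apply engine_right h σ hσpos
    · intro t ht
      exact hδ₂ (by rw [Real.dist_eq, sub_zero, abs_of_nonneg ht.1]; linarith [ht.2])
    · exact hhcont
    · intro t ht
      have htl : |t| < δ₁ := by rw [abs_of_pos ht.1]; linarith [ht.2]
      have hb1 := hest t (ne_of_gt ht.1) htl
      rw [abs_of_pos ht.1] at hb1
      have hb2 := abs_le.1 hb1
      have hck : c*t = 2*a*t + ε'*t + ε'*t := by rw [h5]; ring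
      have hεt : 0 < ε' * t := mul_pos hε'pos ht.1
      have hφpos : 0 < φ t := by
        have hk := mul_lt_mul_of_pos_right (show ε' < c by rw [hε']; linarith) ht.1
        linarith [hb2.1]
      have hdiff : DifferentiableAt ℝ u (L t) := by
        by_contra hnd
        rw [hjunk t hnd] at hφpos
        exact lt_irrefl 0 hφpos
      refine ⟨φ t - (b + 2*a*t), ?_, hhd t hdiff⟩
      linarith [hb2.1]
  · -- left engine
    apply engine_left h σ hσpos
    · intro t ht
      exact hδ₂ (by rw [Real.dist_eq, sub_zero, abs_of_nonpos ht.2]; linarith [ht.1])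
    · exact hhcont
    · intro t ht
      have htl : |t| < δ₁ := by rw [abs_of_neg ht.2]; linarith [ht.1]
      have hb1 := hest t (ne_of_lt ht.2) htl
      rw [abs_of_neg ht.2] at hb1
      have hb2 := abs_le.1 hb1
      have hck : c*t = 2*a*t + ε'*t + ε'*t := by rw [h5]; ring
      have hεt : ε' * t < 0 := mul_neg_of_pos_of_neg hε'pos ht.2
      have hφneg : φ t < 0 := by
        have hk := mul_lt_mul_of_neg_right (show ε' < c by rw [hε']; linarith) ht.2
        linarith [hb2.2]
      have hdiff : DifferentiableAt ℝ u (L t) := by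
        by_contra hnd
        rw [hjunk t hnd] at hφneg
        exact lt_irrefl 0 hφneg
      refine ⟨φ t - (b + 2*a*t), ?_, hhd t hdiff⟩
      linarith [hb2.2]

/-- quadratic nondegeneracy for the obstacle problem:
`sup_{B_r} u ≥ (λ/(2d)) r²` for all sufficiently small `r`. -/
theorem quadratic_nondegeneracy {d : ℕ} (hd : 1 ≤ d)
    (u f : EuclideanSpace ℝ (Fin d) → ℝ) (lam mu : ℝ) (hlam : 0 < lam)
    (hu_nonneg : ∀ x ∈ Metric.ball (0 : EuclideanSpace ℝ (Fin d)) 1, 0 ≤ u x)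
    (hu_cont : ContinuousOn u (Metric.closedBall (0 : EuclideanSpace ℝ (Fin d)) 1))
    (hf : ∀ x ∈ Metric.ball (0 : EuclideanSpace ℝ (Fin d)) 1, lam ≤ f x ∧ f x ≤ mu)
    (heq : ∀ x ∈ Metric.ball (0 : EuclideanSpace ℝ (Fin d)) 1, 0 < u x → lap u x = f x)
    (h0 : (0 : EuclideanSpace ℝ (Fin d)) ∈ closure {x | 0 < u x}) :
    ∃ r₀ > (0:ℝ), ∀ r ∈ Set.Ioo (0:ℝ) r₀,
      lam / (2 * (d:ℝ)) * r ^ 2 ≤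
        ⨆ x ∈ Metric.closedBall (0 : EuclideanSpace ℝ (Fin d)) r, u x := by
  have hd0 : (0:ℝ) < d := by exact_mod_cast Nat.lt_of_lt_of_le Nat.zero_lt_one hd
  refine ⟨1/2, by norm_num, ?_⟩
  intro r hr
  obtain ⟨hr0, hr12⟩ := hr
  have hr1 : r < 1 := by linarith
  -- boundedness of u on the closed unit ball
  obtain ⟨z, hz, hzmax⟩ := (isCompact_closedBall (0:EuclideanSpace ℝ (Fin d)) 1).exists_isMaxOn
    ⟨0, Metric.mem_closedBall_self (by norm_num)⟩ hu_cont
  set C : ℝ := max (u z) 0 with hC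
  have hbdd : ∀ x : EuclideanSpace ℝ (Fin d),
      (⨆ _ : x ∈ Metric.closedBall (0:EuclideanSpace ℝ (Fin d)) r, u x) ≤ C := by
    intro x
    by_cases hx : x ∈ Metric.closedBall (0:EuclideanSpace ℝ (Fin d)) r
    · haveI : Nonempty (x ∈ Metric.closedBall (0:EuclideanSpace ℝ (Fin d)) r) := ⟨hx⟩
      rw [ciSup_const]
      refine le_max_of_le_left (hzmax ?_)
      exact Metric.closedBall_subset_closedBall hr1.le hx
    · haveI : IsEmpty (x ∈ Metric.closedBall (0:EuclideanSpace ℝ (Fin d)) r) := ⟨hx⟩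
      rw [Real.iSup_of_isEmpty]
      exact le_max_right _ _
  have hBdd : BddAbove (Set.range fun x : EuclideanSpace ℝ (Fin d) =>
      ⨆ _ : x ∈ Metric.closedBall (0:EuclideanSpace ℝ (Fin d)) r, u x) := by
    refine ⟨C, ?_⟩
    rintro _ ⟨x, rfl⟩
    exact hbdd x
  have hle : ∀ x ∈ Metric.closedBall (0:EuclideanSpace ℝ (Fin d)) r,
      u x ≤ ⨆ y ∈ Metric.closedBall (0:EuclideanSpace ℝ (Fin d)) r, u y := by
    intro x hx
    have h1 := le_ciSup hBdd x
    haveI : Nonempty (x ∈ Metric.closedBall (0:EuclideanSpace ℝ (Fin d)) r) := ⟨hx⟩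
    rwa [ciSup_const] at h1
  -- main estimate
  have hmain : ∀ ε ∈ Set.Ioo (0:ℝ) (min r lam), (lam - ε)/(2*(d:ℝ)) * (r - ε)^2 ≤
      ⨆ y ∈ Metric.closedBall (0:EuclideanSpace ℝ (Fin d)) r, u y := by
    intro ε hε
    obtain ⟨hεpos, hεlt⟩ := hε
    have hεr : ε < r := lt_of_lt_of_le hεlt (min_le_left _ _)
    have hεlam : ε < lam := lt_of_lt_of_le hεlt (min_le_right _ _)
    obtain ⟨x₀, hx₀mem, hx₀d⟩ := Metric.mem_closure_iff.1 h0 ε hεpos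
    have hux₀ : 0 < u x₀ := hx₀mem
    have hnx₀ : ‖x₀‖ < ε := by
      rw [dist_comm] at hx₀d
      rwa [dist_zero_right] at hx₀d
    set a : ℝ := (lam - ε)/(2*(d:ℝ)) with ha
    have hapos : 0 < a := by
      apply div_pos (by linarith) (by linarith)
    set ρ : ℝ := r - ‖x₀‖ with hρ
    have hρpos : 0 < ρ := by rw [hρ]; linarith
    have hBsub : Metric.closedBall x₀ ρ ⊆ Metric.closedBall (0:EuclideanSpace ℝ (Fin d)) r := by
      intro y hy
      rw [Metric.mem_closedBall] at hy ⊢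
      have h1 : dist y 0 ≤ dist y x₀ + dist x₀ 0 := dist_triangle _ _ _
      rw [dist_zero_right] at h1 ⊢
      rw [dist_zero_right] at h1
      rw [hρ] at hy
      linarith
    have hsub2 : Metric.closedBall (0:EuclideanSpace ℝ (Fin d)) r ⊆
        Metric.ball (0:EuclideanSpace ℝ (Fin d)) 1 := Metric.closedBall_subset_ball hr1
    set w : EuclideanSpace ℝ (Fin d) → ℝ := fun x => u x - a * ‖x - x₀‖^2 with hw
    have hwcont : ContinuousOn w (Metric.closedBall x₀ ρ) := by
      apply ContinuousOn.sub
      · exact hu_cont.mono (hBsub.trans (Metric.closedBall_subset_closedBall hr1.le))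
      · fun_prop
    obtain ⟨xs, hxsmem, hxsmax⟩ := (isCompact_closedBall x₀ ρ).exists_isMaxOn
      ⟨x₀, Metric.mem_closedBall_self hρpos.le⟩ hwcont
    have hwval : w x₀ ≤ w xs := hxsmax (Metric.mem_closedBall_self hρpos.le)
    have hwx₀ : w x₀ = u x₀ := by simp [hw]
    have hwxspos : 0 < w xs := by rw [hwx₀] at hwval; linarith
    have hwxs : w xs = u xs - a * ‖xs - x₀‖^2 := rfl
    have hxs_in_r : xs ∈ Metric.closedBall (0:EuclideanSpace ℝ (Fin d)) r := hBsub hxsmem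
    have hxs_in_1 : xs ∈ Metric.ball (0:EuclideanSpace ℝ (Fin d)) 1 := hsub2 hxs_in_r
    have huxs_pos : 0 < u xs := by nlinarith [sq_nonneg ‖xs - x₀‖]
    have hsphere : ρ ≤ dist xs x₀ := by
      by_contra hin
      push_neg at hin
      have hnb : Metric.closedBall x₀ ρ ∈ nhds xs :=
        Filter.mem_of_superset (Metric.isOpen_ball.mem_nhds (Metric.mem_ball.2 hin))
          Metric.ball_subset_closedBall
      have hlocmax : IsLocalMax w xs := hxsmax.isLocalMax hnb
      have hucontxs : ContinuousAt u xs := by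
        have hnb1 : Metric.closedBall (0:EuclideanSpace ℝ (Fin d)) 1 ∈ nhds xs :=
          Filter.mem_of_superset (Metric.isOpen_ball.mem_nhds hxs_in_1)
            Metric.ball_subset_closedBall
        exact hu_cont.continuousAt hnb1
      have hkey := key u a hapos.le x₀ xs hucontxs hlocmax
      have hlap : lap u xs = f xs := heq xs hxs_in_1 huxs_pos
      have hfxs := (hf xs hxs_in_1).1
      have h2ad : 2*a*(d:ℝ) = lam - ε := by
        rw [ha]; field_simp
      rw [hlap, h2ad] at hkey
      linarith
    have hdxs : ρ ≤ ‖xs - x₀‖ := by rwa [dist_eq_norm] at hsphere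
    have hρ2 : a * ρ^2 ≤ a * ‖xs - x₀‖^2 :=
      mul_le_mul_of_nonneg_left (pow_le_pow_left₀ hρpos.le hdxs 2) hapos.le
    have hrε2 : a * (r - ε)^2 ≤ a * ρ^2 := by
      apply mul_le_mul_of_nonneg_left _ hapos.le
      apply pow_le_pow_left₀ (by linarith) (by rw [hρ]; linarith) 2
    calc (lam - ε)/(2*(d:ℝ)) * (r-ε)^2 = a*(r-ε)^2 := by rw [ha]
      _ ≤ a * ρ^2 := hrε2
      _ ≤ a * ‖xs - x₀‖^2 := hρ2
      _ ≤ u xs := by linarith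
      _ ≤ _ := hle xs hxs_in_r
  -- pass to the limit ε → 0⁺
  have htend : Filter.Tendsto (fun ε : ℝ => (lam - ε)/(2*(d:ℝ)) * (r - ε)^2)
      (nhdsWithin 0 (Set.Ioi 0)) (nhds (lam/(2*(d:ℝ)) * r^2)) := by
    have hcont : Continuous (fun ε : ℝ => (lam - ε)/(2*(d:ℝ)) * (r - ε)^2) := by
      apply Continuous.mul
      · exact (continuous_const.sub continuous_id).div_const _
      · exact (continuous_const.sub continuous_id).pow 2
    have h1 := hcont.tendsto 0
    simpa using h1.mono_left nhdsWithin_le_nhds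
  refine le_of_tendsto htend ?_
  filter_upwards [Ioo_mem_nhdsGT_of_mem
    (show (0:ℝ) ∈ Set.Ico (0:ℝ) (min r lam) from ⟨le_refl 0, lt_min hr0 hlam⟩)] with ε hε
  exact hmain ε hε
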